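/- Let a, b, c be integers with 2 ≤ a ≤ b ≤ c. Then there exists a unique integer c₀ with ab − b ≤ c₀ ≤ ab − 1 such that the cyclic triple (a, b, c) is mutation-acyclic if and only if c > c₀. (Equivalently: for fixed a ≤ b, the set of c ≥ b for which (a,b,c) is mutation-cyclic is exactly an interval [b, c₀].) -/

import Mathlib

/-- One mutation step on a triple of integers: replace one entry `x` by
(product of the other two) − `x`. -/
def mutStep (t s : ℤ × ℤ × ℤ) : Prop :=
  s = (t.1, t.2.1, t.1 * t.2.1 - t.2.2) ∨
  s = (t.1, t.1 * t.2.2 - t.2.1, t.2.2) ∨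
  s = (t.2.1 * t.2.2 - t.1, t.2.1, t.2.2)

/-- A triple is mutation-acyclic if some finite sequence of mutations
reaches a triple with a nonpositive entry (an acyclic quiver). -/
def MutationAcyclic (t : ℤ × ℤ × ℤ) : Prop :=
  ∃ s, Relation.ReflTransGen mutStep t s ∧ (s.1 ≤ 0 ∨ s.2.1 ≤ 0 ∨ s.2.2 ≤ 0)

/-- A triple is mutation-cyclic if every quiver in its mutation class is cyclic. -/
def MutationCyclic (t : ℤ × ℤ × ℤ) : Prop := ¬ MutationAcyclic t

/-- The Markov-type invariant `x² + y² + z² − xyz`, preserved by mutation. -/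
def Mf (t : ℤ × ℤ × ℤ) : ℤ := t.1^2 + t.2.1^2 + t.2.2^2 - t.1 * t.2.1 * t.2.2

/-- The invariant region: all entries at least 2 and Markov invariant at most 4. -/
def Pinv (t : ℤ × ℤ × ℤ) : Prop := 2 ≤ t.1 ∧ 2 ≤ t.2.1 ∧ 2 ≤ t.2.2 ∧ Mf t ≤ 4

lemma inv_step {t s} (h : mutStep t s) (ht : Pinv t) : Pinv s := by
  obtain ⟨x, y, z⟩ := t
  obtain ⟨hx, hy, hz, hM⟩ := ht
  simp only [Pinv, Mf] at *
  rcases h with h | h | h <;> subst h <;> simp_all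
  · constructor
    · by_contra hw
      push_neg at hw
      nlinarith [sq_nonneg (x - y), sq_nonneg (x*y - z - 2), mul_nonneg (by linarith : (0:ℤ) ≤ 1 - (x*y - z)) (by nlinarith : (0:ℤ) ≤ x*y - 4)]
    · ring_nf; ring_nf at hM; linarith
  · constructor
    · by_contra hw
      push_neg at hw
      nlinarith [sq_nonneg (x - z), mul_nonneg (by linarith : (0:ℤ) ≤ 1 - (x*z - y)) (by nlinarith : (0:ℤ) ≤ x*z - 4)]
    · ring_nf; ring_nf at hM; linarith
  · constructor
    · by_contra hw
      push_neg at hw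
      nlinarith [sq_nonneg (y - z), mul_nonneg (by linarith : (0:ℤ) ≤ 1 - (y*z - x)) (by nlinarith : (0:ℤ) ≤ y*z - 4)]
    · ring_nf; ring_nf at hM; linarith

lemma inv_rtg {t s} (h : Relation.ReflTransGen mutStep t s) (ht : Pinv t) : Pinv s := by
  induction h with
  | refl => exact ht
  | tail _ hstep ih => exact inv_step hstep ih

/-- If all entries are at least 2 and the Markov invariant is at most 4,
the triple is mutation-cyclic. -/
lemma cyclic_of_inv {t} (ht : Pinv t) : MutationCyclic t := by
  rintro ⟨s, hp, hn⟩
  obtain ⟨h1, h2, h3, _⟩ := inv_rtg hp ht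
  rcases hn with h | h | h <;> linarith

def sw23 (t : ℤ × ℤ × ℤ) : ℤ × ℤ × ℤ := (t.1, t.2.2, t.2.1)
def sw12 (t : ℤ × ℤ × ℤ) : ℤ × ℤ × ℤ := (t.2.1, t.1, t.2.2)

lemma mutStep_sw23 {t s} (h : mutStep t s) : mutStep (sw23 t) (sw23 s) := by
  obtain ⟨p, q, r⟩ := t
  rcases h with h | h | h <;> subst h <;> simp [mutStep, sw23, mul_comm]

lemma mutStep_sw12 {t s} (h : mutStep t s) : mutStep (sw12 t) (sw12 s) := by
  obtain ⟨p, q, r⟩ := t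
  rcases h with h | h | h <;> subst h <;> simp [mutStep, sw12, mul_comm]

lemma acyclic_sw23 {t} (h : MutationAcyclic t) : MutationAcyclic (sw23 t) := by
  obtain ⟨s, hp, hn⟩ := h
  exact ⟨sw23 s, Relation.ReflTransGen.lift sw23 (fun _ _ => mutStep_sw23) _ _ hp,
    by simp only [sw23]; tauto⟩

lemma acyclic_sw12 {t} (h : MutationAcyclic t) : MutationAcyclic (sw12 t) := by
  obtain ⟨s, hp, hn⟩ := h
  exact ⟨sw12 s, Relation.ReflTransGen.lift sw12 (fun _ _ => mutStep_sw12) _ _ hp,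
    by simp only [sw12]; tauto⟩

lemma acyclic_head {t u} (h : mutStep t u) (hu : MutationAcyclic u) : MutationAcyclic t := by
  obtain ⟨s, hp, hn⟩ := hu
  exact ⟨s, Relation.ReflTransGen.head h hp, hn⟩

/-- If `2 ≤ a ≤ b ≤ c` and `2c ≤ ab` then the Markov invariant is at most 4. -/
lemma M_le_of_small (a b c : ℤ) (ha : 2 ≤ a) (hab : a ≤ b) (hbc : b ≤ c)
    (h : 2 * c ≤ a * b) : a^2 + b^2 + c^2 - a*b*c ≤ 4 := by
  nlinarith [mul_nonneg (by linarith : (0:ℤ) ≤ c - b) (by linarith : (0:ℤ) ≤ a*b - b - c),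
    mul_nonneg (by linarith : (0:ℤ) ≤ a - 2) (by nlinarith : (0:ℤ) ≤ b*b - a - 2)]

/-- Descent lemma: with large Markov invariant, the triple is mutation-acyclic. -/
lemma acyc_of_M (n : ℕ) : ∀ a b c : ℤ, 2 ≤ a → a ≤ b → b ≤ c → (a + b + c).toNat ≤ n →
    4 < a^2 + b^2 + c^2 - a*b*c → MutationAcyclic (a, b, c) := by
  induction n using Nat.strong_induction_on with
  | _ n ih =>
    intro a b c ha hab hbc hn hM
    have h2c : a * b < 2 * c := by
      by_contra h
      push_neg at h
      exact absurd (M_le_of_small a b c ha hab hbc h) (by linarith)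
    -- mutate the third entry: c ↦ a*b - c < c
    rcases le_or_gt (a * b - c) 0 with hc' | hc'
    · exact ⟨(a, b, a*b - c), Relation.ReflTransGen.single (Or.inl rfl),
        Or.inr (Or.inr hc')⟩
    · rcases eq_or_lt_of_le (by linarith : (1:ℤ) ≤ a*b - c) with hc1 | hc2
      · -- a*b - c = 1 : mutate again at the middle entry, getting a - b ≤ 0
        refine ⟨(a, a * (a*b - c) - b, a*b - c),
          Relation.ReflTransGen.head (Or.inl rfl)
            (Relation.ReflTransGen.single (Or.inr (Or.inl rfl))), Or.inr (Or.inl ?_)⟩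
        show a * (a*b - c) - b ≤ 0
        rw [← hc1]
        linarith
      · -- 2 ≤ a*b - c
        set c' := a * b - c with hc'def
        have hc'lt : c' < c := by omega
        have hMc' : 4 < a^2 + b^2 + c'^2 - a*b*c' := by
          have : a^2 + b^2 + c'^2 - a*b*c' = a^2 + b^2 + c^2 - a*b*c := by
            rw [hc'def]; ring
          omega
        have hsum : (a + b + c').toNat < n := by omega
        have hacy : MutationAcyclic (a, b, c') := by
          rcases le_or_gt b c' with hbc' | hbc'
          · exact ih _ hsum a b c' ha hab hbc' le_rfl hMc'
          · rcases le_or_gt a c' with hac' | hac'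
            · have := ih _ hsum a c' b ha hac' (le_of_lt hbc') (by omega)
                (by nlinarith)
              exact acyclic_sw23 (by exact this)
            · have := ih _ hsum c' a b (by omega) (le_of_lt hac') hab (by omega)
                (by nlinarith)
              have h2 := acyclic_sw12 this
              exact acyclic_sw23 (by exact h2)
        exact acyclic_head (Or.inl rfl) hacy

/-- Main characterization: for `2 ≤ a ≤ b ≤ c`, the triple is mutation-acyclic
iff the Markov invariant exceeds 4. -/
lemma key (a b c : ℤ) (ha : 2 ≤ a) (hab : a ≤ b) (hbc : b ≤ c) :
    MutationAcyclic (a, b, c) ↔ 4 < a^2 + b^2 + c^2 - a*b*c := by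
  constructor
  · intro h
    by_contra hM
    push_neg at hM
    exact cyclic_of_inv ⟨ha, by linarith, by linarith, by simpa [Mf] using hM⟩ h
  · intro hM
    exact acyc_of_M (a + b + c).toNat a b c ha hab hbc le_rfl hM

theorem stmt_16 (a b : ℤ) (ha : 2 ≤ a) (hab : a ≤ b) :
    ∃! c₀ : ℤ, a * b - b ≤ c₀ ∧ c₀ ≤ a * b - 1 ∧
      ∀ c : ℤ, b ≤ c → (MutationAcyclic (a, b, c) ↔ c > c₀) := by
  have hb2 : 2 ≤ b := le_trans ha hab
  -- the quadratic q(c) = c² - abc + a² + b² - 4 ; acyclic ↔ q(c) > 0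
  set q : ℤ → ℤ := fun c => c^2 - a*b*c + a^2 + b^2 - 4 with hq
  have habb : b ≤ a * b - b := by nlinarith
  -- q(a*b - b) ≤ 0
  have hqab : q (a*b - b) ≤ 0 := by
    simp only [hq]
    nlinarith [mul_nonneg (by linarith : (0:ℤ) ≤ a - 2) (by nlinarith : (0:ℤ) ≤ b*b - a - 2)]
  obtain ⟨c₀, ⟨hc₀1, hc₀2⟩, hgreat⟩ := Int.exists_greatest_of_bdd
    (P := fun c => a*b - b ≤ c ∧ q c ≤ 0)
    ⟨a*b - 1, by
      rintro z ⟨hz1, hz2⟩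
      by_contra h
      push_neg at h
      have : a*b - 1 + 1 ≤ z := by omega
      simp only [hq] at hz2
      nlinarith [mul_nonneg (by omega : (0:ℤ) ≤ z - a*b + 1) (by nlinarith : (0:ℤ) ≤ z - 1),
        sq_nonneg (a - b)]⟩
    ⟨a*b - b, le_rfl, hqab⟩
  have hc₀b : b ≤ c₀ := le_trans habb hc₀1
  have hc₀top : c₀ ≤ a*b - 1 := by
    by_contra h
    push_neg at h
    have h2 := hc₀2
    simp only [hq] at h2
    nlinarith [mul_nonneg (by omega : (0:ℤ) ≤ c₀ - a*b + 1) (by nlinarith : (0:ℤ) ≤ c₀ - 1),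
      sq_nonneg (a - b)]
  refine ⟨c₀, ⟨hc₀1, hc₀top, ?_⟩, ?_⟩
  · intro c hbc
    rw [key a b c ha hab hbc]
    constructor
    · intro hM
      by_contra h
      push_neg at h  -- c ≤ c₀
      rcases le_or_gt (2 * c) (a * b) with hs | hs
      · have := M_le_of_small a b c ha hab hbc hs
        omega
      · -- on the increasing branch: q c ≤ q c₀ ≤ 0
        have hqc₀ := hc₀2
        simp only [hq] at hqc₀
        nlinarith [mul_nonneg (by omega : (0:ℤ) ≤ c₀ - c) (by omega : (0:ℤ) ≤ c₀ + c - a*b)]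
    · intro h
      by_contra hM
      push_neg at hM
      have hqc : q c ≤ 0 := by simp only [hq]; omega
      have : c ≤ c₀ := hgreat c ⟨by omega, hqc⟩
      omega
  · rintro c₁ ⟨hc₁1, hc₁2, hc₁iff⟩
    have hc₁b : b ≤ c₁ := le_trans habb hc₁1
    have H1 := hc₁iff c₀ hc₀b
    have H2 : ∀ c : ℤ, b ≤ c → (MutationAcyclic (a, b, c) ↔ c > c₀) := by
      intro c hbc
      rw [key a b c ha hab hbc]
      constructor
      · intro hM
        by_contra h
        push_neg at h
        rcases le_or_gt (2 * c) (a * b) with hs | hs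
        · have := M_le_of_small a b c ha hab hbc hs
          omega
        · have hqc₀ := hc₀2
          simp only [hq] at hqc₀
          nlinarith [mul_nonneg (by omega : (0:ℤ) ≤ c₀ - c) (by omega : (0:ℤ) ≤ c₀ + c - a*b)]
      · intro h
        by_contra hM
        push_neg at hM
        have hqc : q c ≤ 0 := by simp only [hq]; omega
        have : c ≤ c₀ := hgreat c ⟨by omega, hqc⟩
        omega
    have H3 := H2 c₁ hc₁b
    have H4 := hc₁iff c₁ hc₁b
    have H5 := H2 c₀ hc₀b
    have h1 : c₀ ≤ c₁ := by
      by_contra h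
      push_neg at h
      exact lt_irrefl c₀ (H5.mp (H1.mpr h))
    have h2 : c₁ ≤ c₀ := by
      by_contra h
      push_neg at h
      exact lt_irrefl c₁ (H4.mp (H3.mpr h))
    omega
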